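/- For a dataset D = (s₁,…,sₙ) drawn i.i.d. from P (i.e., D ∼ Pⁿ), define the clipping bias b_D := max_{x∈𝒳} ‖(1/n) Σ_{i=1}^n ( g(x,sᵢ) − Π_C(g(x,sᵢ)) )‖. Then E_{D∼Pⁿ}[ b_D ] ≤ G_k^k / ((k−1)·C^{k−1}). -/

import Mathlib

open MeasureTheory

/-- Euclidean clipping to the ball of radius `C`: `Π_C(v) = v·min(C/‖v‖, 1)`,
with `Π_C(0) = 0` (division by zero yields `0` in Lean). -/
noncomputable def euclidClip {d : ℕ} (C : ℝ) (v : EuclideanSpace ℝ (Fin d)) :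
    EuclideanSpace ℝ (Fin d) :=
  (min (C / ‖v‖) 1) • v

lemma clip_bound {d : ℕ} (C : ℝ) (hC : 0 < C) (k : ℕ) (hk : 2 ≤ k)
    (v : EuclideanSpace ℝ (Fin d)) :
    ‖v - euclidClip C v‖ ≤ ‖v‖ ^ k / (((k : ℝ) - 1) * C ^ (k - 1)) := by
  obtain ⟨m, rfl⟩ : ∃ m, k = m + 1 := ⟨k - 1, by omega⟩
  have hm : 1 ≤ m := by omega
  have hmpos : (0:ℝ) < m := by exact_mod_cast hm
  have hden : (0:ℝ) < ((m + 1 : ℕ) - 1 : ℝ) * C ^ ((m+1) - 1) := by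
    push_cast; simp only [add_sub_cancel_right, Nat.add_sub_cancel]
    positivity
  set t := ‖v‖ with ht
  have htnn : 0 ≤ t := norm_nonneg v
  by_cases hle : t ≤ C
  · have hclip : euclidClip C v = v := by
      rcases eq_or_lt_of_le htnn with h0 | h0
      · have : v = 0 := by simpa [ht] using (norm_eq_zero.mp h0.symm)
        simp [euclidClip, this]
      · have : (1:ℝ) ≤ C / t := (one_le_div h0).mpr hle
        simp [euclidClip, ← ht, min_eq_right this]
    rw [hclip, sub_self, norm_zero]
    positivity
  · push_neg at hle
    have htpos : 0 < t := lt_trans hC hle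
    have hmin : min (C / t) 1 = C / t := min_eq_left ((div_le_one htpos).mpr hle.le)
    have hnorm : ‖v - euclidClip C v‖ = t - C := by
      have : v - euclidClip C v = (1 - C / t) • v := by
        simp [euclidClip, ← ht, hmin, sub_smul, one_smul]
      rw [this, norm_smul, Real.norm_eq_abs, ← ht,
        abs_of_nonneg (by rw [sub_nonneg]; exact (div_le_one htpos).mpr hle.le)]
      field_simp
    rw [hnorm]
    have ha : (0:ℝ) ≤ (t - C) / C := div_nonneg (by linarith) hC.le
    have hb := one_add_mul_le_pow (a := (t - C) / C) (by linarith) m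
    have h1 : (1 + (t - C) / C) = t / C := by field_simp; ring
    rw [h1, div_pow] at hb
    have hsimp : ((m + 1 : ℕ) - 1 : ℝ) * C ^ ((m+1) - 1) = (m : ℝ) * C ^ m := by
      push_cast; simp
    rw [hsimp, le_div_iff₀ (by positivity)]
    have hkey : (t - C) * ((m:ℝ) * C ^ m) ≤ C * t ^ m - C * C ^ m := by
      have hmul := mul_le_mul_of_nonneg_right hb (le_of_lt (by positivity : (0:ℝ) < C * C ^ m))
      have hC0 : (C:ℝ) ≠ 0 := ne_of_gt hC
      have hCm : (C:ℝ)^m ≠ 0 := pow_ne_zero _ hC0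
      have h2 : (1 + (m:ℝ) * ((t - C) / C)) * (C * C ^ m) = C * C ^ m + (t - C) * ((m:ℝ) * C ^ m) := by
        field_simp
      have h3 : (t ^ m / C ^ m) * (C * C ^ m) = C * t ^ m := by
        field_simp
      rw [h2, h3] at hmul
      linarith
    have ht1 : C * t ^ m ≤ t ^ (m+1) := by
      rw [pow_succ]
      calc C * t ^ m ≤ t * t ^ m := by nlinarith [pow_nonneg htnn m]
        _ = t ^ m * t := by ring
    nlinarith [pow_nonneg hC.le m]

lemma pi_map_eval {S : Type*} [MeasurableSpace S] (P : Measure S) [IsProbabilityMeasure P]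
    (n : ℕ) (i : Fin n) :
    (Measure.pi fun _ : Fin n => P).map (fun D => D i) = P := by
  ext A hA
  rw [Measure.map_apply (measurable_pi_apply i) hA]
  have hpre : (fun D : Fin n → S => D i) ⁻¹' A
      = Set.pi Set.univ (Function.update (fun _ : Fin n => (Set.univ : Set S)) i A) := by
    rw [Set.eval_preimage]
  rw [hpre, Measure.pi_pi]
  rw [Finset.prod_eq_single i]
  · simp
  · intro j _ hj; simp [Function.update_of_ne hj]
  · simp

/-- For `D ∼ Pⁿ` i.i.d., the expected clipping bias
`b_D = max_{x∈𝒳} ‖(1/n)∑ᵢ (g(x,sᵢ) − Π_C(g(x,sᵢ)))‖` satisfies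
`E[b_D] ≤ G_k^k / ((k−1) C^{k−1})`. -/
theorem expected_clipping_bias
    {d : ℕ} {S : Type*} [MeasurableSpace S]
    (P : Measure S) [IsProbabilityMeasure P]
    (X : Set (EuclideanSpace ℝ (Fin d)))
    (hXne : X.Nonempty) (hXcomp : IsCompact X)
    (g : EuclideanSpace ℝ (Fin d) → S → EuclideanSpace ℝ (Fin d))
    (hgmeas : Measurable (fun p : EuclideanSpace ℝ (Fin d) × S => g p.1 p.2))
    (hgcont : ∀ s, ContinuousOn (fun x => g x s) X)
    (k : ℕ) (hk : 2 ≤ k) (n : ℕ) (hn : 1 ≤ n)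
    (C : ℝ) (hC : 0 < C) (G : ℝ) (hG : 0 ≤ G)
    (hmoment : ∫⁻ s, ENNReal.ofReal (⨆ x ∈ X, ‖g x s‖ ^ k) ∂P ≤ ENNReal.ofReal (G ^ k)) :
    (∫⁻ D : Fin n → S,
        ENNReal.ofReal
          (⨆ x ∈ X, ‖(n : ℝ)⁻¹ • ∑ i, (g x (D i) - euclidClip C (g x (D i)))‖)
        ∂(Measure.pi fun _ : Fin n => P))
      ≤ ENNReal.ofReal (G ^ k / (((k : ℝ) - 1) * C ^ (k - 1))) := by
  set c : ℝ := ((k : ℝ) - 1) * C ^ (k - 1) with hc_def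
  have hk1 : (1:ℝ) < (k:ℝ) := by
    have : (2:ℝ) ≤ (k:ℝ) := by exact_mod_cast hk
    linarith
  have hcpos : 0 < c := mul_pos (by linarith) (pow_pos hC _)
  have hnpos : (0:ℝ) < n := by exact_mod_cast hn
  set f : EuclideanSpace ℝ (Fin d) → S → ℝ := fun x s => ‖g x s‖ ^ k with hf_def
  set M : S → ℝ := fun s => ⨆ x ∈ X, f x s with hM_def
  have hfc : ∀ s, ContinuousOn (fun x => f x s) X := fun s => ((hgcont s).norm).pow k
  have hfnn : ∀ x s, 0 ≤ f x s := fun x s => by positivity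
  have hbdd : ∀ s, BddAbove ((fun x => f x s) '' X) := fun s =>
    (hXcomp.image_of_continuousOn (hfc s)).bddAbove
  have hbddr : ∀ s, BddAbove (Set.range fun x => ⨆ _ : x ∈ X, f x s) := by
    intro s
    obtain ⟨B, hB⟩ := hbdd s
    refine ⟨max B 0, ?_⟩
    rintro y ⟨x, rfl⟩
    show (⨆ _ : x ∈ X, f x s) ≤ max B 0
    by_cases hx : x ∈ X
    · rw [ciSup_pos hx]
      exact le_max_of_le_left (hB (Set.mem_image_of_mem _ hx))
    · haveI : IsEmpty (x ∈ X) := ⟨hx⟩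
      rw [Real.iSup_of_isEmpty]
      exact le_max_right _ _
  have hA : ∀ s, ∀ x ∈ X, f x s ≤ M s := by
    intro s x hx
    have := le_ciSup (hbddr s) x
    rwa [ciSup_pos hx] at this
  have hMnn : ∀ s, 0 ≤ M s := fun s =>
    Real.iSup_nonneg fun x => Real.iSup_nonneg fun _ => hfnn x s
  -- countable dense subset of X
  obtain ⟨T, hTX, hTc, hTd⟩ :=
    (TopologicalSpace.IsSeparable.of_separableSpace X).exists_countable_dense_subset
  haveI : Countable T := hTc.to_subtype
  have hTne : T.Nonempty := by
    rcases hXne with ⟨x, hx⟩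
    by_contra h
    rw [Set.not_nonempty_iff_eq_empty] at h
    have := hTd hx
    simp [h] at this
  haveI : Nonempty T := hTne.to_subtype
  set N : S → ENNReal := fun s => ⨆ t : T, ENNReal.ofReal (f t s) with hN_def
  have hgm : ∀ x, Measurable fun s => g x s := fun x =>
    hgmeas.comp (measurable_const.prodMk measurable_id)
  have hNmeas : Measurable N :=
    Measurable.iSup fun t => ENNReal.measurable_ofReal.comp (((hgm t).norm).pow_const k)
  have hNleM : ∀ s, N s ≤ ENNReal.ofReal (M s) :=
    fun s => iSup_le fun t => ENNReal.ofReal_le_ofReal (hA s t (hTX t.2))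
  have hMleN : ∀ s, ENNReal.ofReal (M s) ≤ N s := by
    intro s
    obtain ⟨x₀, hx₀X, hx₀max'⟩ := hXcomp.exists_isMaxOn hXne (hfc s)
    have hx₀max : ∀ x ∈ X, f x s ≤ f x₀ s := fun x hx => hx₀max' hx
    have hMle : M s ≤ f x₀ s :=
      Real.iSup_le (fun x => Real.iSup_le (fun hx => hx₀max x hx) (hfnn x₀ s)) (hfnn x₀ s)
    have hbddT : BddAbove (Set.range fun t : T => f (t : EuclideanSpace ℝ (Fin d)) s) := by
      obtain ⟨B0, hB0⟩ := hbdd s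
      exact ⟨B0, by rintro y ⟨t, rfl⟩; exact hB0 (Set.mem_image_of_mem _ (hTX t.2))⟩
    set B : ℝ := ⨆ t : T, f (t : EuclideanSpace ℝ (Fin d)) s with hB_def
    have hcw : ContinuousWithinAt (fun x => f x s) T x₀ :=
      ((hfc s) x₀ hx₀X).mono hTX
    have hmem : f x₀ s ∈ closure ((fun x => f x s) '' T) :=
      hcw.mem_closure_image (hTd hx₀X)
    have himg : (fun x => f x s) '' T ⊆ Set.Iic B := by
      rintro y ⟨x, hxT, rfl⟩
      exact le_ciSup hbddT ⟨x, hxT⟩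
    have hfx₀ : f x₀ s ≤ B := by
      have := (closure_mono himg) hmem
      rwa [isClosed_Iic.closure_eq] at this
    have hBN : ENNReal.ofReal B ≤ N s := by
      apply ENNReal.le_of_forall_pos_le_add
      intro ε hε _
      have hlt : B - (ε:ℝ) < B := by
        have : (0:ℝ) < ε := hε
        linarith
      obtain ⟨t, ht⟩ := exists_lt_of_lt_ciSup hlt
      calc ENNReal.ofReal B ≤ ENNReal.ofReal (f (t : EuclideanSpace ℝ (Fin d)) s + ε) :=
            ENNReal.ofReal_le_ofReal (by linarith)
        _ ≤ ENNReal.ofReal (f (t : EuclideanSpace ℝ (Fin d)) s) + ENNReal.ofReal ε :=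
            ENNReal.ofReal_add_le
        _ ≤ N s + (ε : ENNReal) := by
            refine add_le_add ?_ (by simp)
            exact le_iSup (fun t : T => ENNReal.ofReal (f (t : EuclideanSpace ℝ (Fin d)) s)) t
    calc ENNReal.ofReal (M s) ≤ ENNReal.ofReal (f x₀ s) := ENNReal.ofReal_le_ofReal hMle
      _ ≤ ENNReal.ofReal B := ENNReal.ofReal_le_ofReal hfx₀
      _ ≤ N s := hBN
  -- pointwise real bound
  have hpt : ∀ D : Fin n → S,
      (⨆ x ∈ X, ‖(n : ℝ)⁻¹ • ∑ i, (g x (D i) - euclidClip C (g x (D i)))‖)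
        ≤ (n : ℝ)⁻¹ * c⁻¹ * ∑ i, M (D i) := by
    intro D
    have hRHSnn : 0 ≤ (n : ℝ)⁻¹ * c⁻¹ * ∑ i, M (D i) :=
      mul_nonneg (mul_nonneg (by positivity) (by positivity))
        (Finset.sum_nonneg fun i _ => hMnn _)
    refine Real.iSup_le (fun x => Real.iSup_le (fun hx => ?_) hRHSnn) hRHSnn
    calc ‖(n : ℝ)⁻¹ • ∑ i, (g x (D i) - euclidClip C (g x (D i)))‖
        = (n : ℝ)⁻¹ * ‖∑ i, (g x (D i) - euclidClip C (g x (D i)))‖ := by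
          rw [norm_smul, Real.norm_eq_abs, abs_of_nonneg (by positivity)]
      _ ≤ (n : ℝ)⁻¹ * ∑ i, ‖g x (D i) - euclidClip C (g x (D i))‖ :=
          mul_le_mul_of_nonneg_left (norm_sum_le _ _) (by positivity)
      _ ≤ (n : ℝ)⁻¹ * ∑ i, M (D i) / c := by
          refine mul_le_mul_of_nonneg_left (Finset.sum_le_sum fun i _ => ?_) (by positivity)
          calc ‖g x (D i) - euclidClip C (g x (D i))‖ ≤ f x (D i) / c :=
                clip_bound C hC k hk (g x (D i))
            _ ≤ M (D i) / c :=
                div_le_div_of_nonneg_right (hA (D i) x hx) hcpos.le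
      _ = (n : ℝ)⁻¹ * c⁻¹ * ∑ i, M (D i) := by
          rw [← Finset.sum_div]; ring
  have hptE : ∀ D : Fin n → S,
      ENNReal.ofReal
          (⨆ x ∈ X, ‖(n : ℝ)⁻¹ • ∑ i, (g x (D i) - euclidClip C (g x (D i)))‖)
        ≤ ENNReal.ofReal ((n : ℝ)⁻¹ * c⁻¹) * ∑ i, N (D i) := by
    intro D
    refine le_trans (ENNReal.ofReal_le_ofReal (hpt D)) ?_
    rw [ENNReal.ofReal_mul (by positivity)]
    refine mul_le_mul' le_rfl ?_
    calc ENNReal.ofReal (∑ i, M (D i)) = ∑ i, ENNReal.ofReal (M (D i)) :=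
          ENNReal.ofReal_sum_of_nonneg (fun i _ => hMnn _)
      _ ≤ ∑ i, N (D i) := Finset.sum_le_sum fun i _ => hMleN _
  have hNi : ∀ i : Fin n,
      (∫⁻ D : Fin n → S, N (D i) ∂(Measure.pi fun _ : Fin n => P)) = ∫⁻ s, N s ∂P := by
    intro i
    conv_rhs => rw [← pi_map_eval P n i]
    rw [lintegral_map hNmeas (measurable_pi_apply i)]
  have hmoment' : (∫⁻ s, N s ∂P) ≤ ENNReal.ofReal (G ^ k) :=
    le_trans (lintegral_mono hNleM) hmoment
  have hne : (n : ENNReal) ≠ 0 := by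
    simp only [ne_eq, Nat.cast_eq_zero]; omega
  have hnt : (n : ENNReal) ≠ ⊤ := ENNReal.natCast_ne_top n
  calc (∫⁻ D : Fin n → S,
        ENNReal.ofReal
          (⨆ x ∈ X, ‖(n : ℝ)⁻¹ • ∑ i, (g x (D i) - euclidClip C (g x (D i)))‖)
        ∂(Measure.pi fun _ : Fin n => P))
      ≤ ∫⁻ D : Fin n → S, ENNReal.ofReal ((n : ℝ)⁻¹ * c⁻¹) * ∑ i, N (D i)
          ∂(Measure.pi fun _ : Fin n => P) := lintegral_mono hptE
    _ = ENNReal.ofReal ((n : ℝ)⁻¹ * c⁻¹)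
          * ∑ i : Fin n, ∫⁻ D : Fin n → S, N (D i) ∂(Measure.pi fun _ : Fin n => P) := by
        have hmeasi : ∀ i : Fin n, Measurable fun D : Fin n → S => N (D i) :=
          fun i => hNmeas.comp (measurable_pi_apply i)
        rw [lintegral_const_mul _ (Finset.measurable_sum _ fun i _ => hmeasi i),
          lintegral_finset_sum _ (fun i _ => hmeasi i)]
    _ = ENNReal.ofReal ((n : ℝ)⁻¹ * c⁻¹) * ∑ _i : Fin n, ∫⁻ s, N s ∂P := by
        congr 1
        exact Finset.sum_congr rfl fun i _ => hNi i
    _ = ENNReal.ofReal ((n : ℝ)⁻¹ * c⁻¹) * ((n : ENNReal) * ∫⁻ s, N s ∂P) := by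
        rw [Finset.sum_const, Finset.card_univ, Fintype.card_fin, nsmul_eq_mul]
    _ ≤ ENNReal.ofReal ((n : ℝ)⁻¹ * c⁻¹) * ((n : ENNReal) * ENNReal.ofReal (G ^ k)) :=
        mul_le_mul' le_rfl (mul_le_mul' le_rfl hmoment')
    _ = ENNReal.ofReal (G ^ k / c) := by
        rw [ENNReal.ofReal_mul (by positivity), ENNReal.ofReal_inv_of_pos hnpos,
          ENNReal.ofReal_natCast]
        rw [show ((n : ENNReal))⁻¹ * ENNReal.ofReal c⁻¹
            * ((n : ENNReal) * ENNReal.ofReal (G ^ k))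
            = ((n : ENNReal)⁻¹ * (n : ENNReal))
              * (ENNReal.ofReal c⁻¹ * ENNReal.ofReal (G ^ k)) from by ring]
        rw [ENNReal.inv_mul_cancel hne hnt, one_mul,
          ← ENNReal.ofReal_mul (by positivity), div_eq_mul_inv, mul_comm]
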